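/- Let 𝒯 be a tree (a connected undirected graph with finitely many vertices, no cycles and no self-loops) with vertex set 𝒱 = {1,…,n} and edge set ℰ. Suppose attached to each vertex i is a Polish Borel probability space (𝒳_i, ℱ_i, P_i), and attached to each edge (i,j) ∈ ℰ with i < j is a probability law P_{ij} on (𝒳_i × 𝒳_j, ℱ_i ⊗ ℱ_j). Assume these laws are pairwise consistent: for each (i,j) ∈ ℰ, the projection of P_{ij} onto 𝒳_i is P_i and the projection onto 𝒳_j is P_j. Then there exists a probability law P on ( ∏_{i=1}^n 𝒳_i, ⊗_{i=1}^n ℱ_i ) such that the projection of P onto 𝒳_i × 𝒳_j equals P_{ij} for every (i,j) ∈ ℰ, and hence the projection of P onto 𝒳_i equals P_i for every i ∈ 𝒱. -/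

import Mathlib

open MeasureTheory
open scoped ENNReal BigOperators

open ProbabilityTheory

noncomputable section


lemma aux_pi_marg {ι : Type} [Fintype ι] [DecidableEq ι] (X : ι → Type)
    [∀ i, MeasurableSpace (X i)] (μ : ∀ i, Measure (X i))
    [∀ i, IsProbabilityMeasure (μ i)] (i : ι) :
    (Measure.pi μ).map (fun x => x i) = μ i := by
  ext s hs
  rw [Measure.map_apply (measurable_pi_apply i) hs]
  have h : (fun x : ∀ j, X j => x i) ⁻¹' s
      = Set.pi Set.univ (Function.update (fun j => (Set.univ : Set (X j))) i s) := by
    ext x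
    simp only [Set.mem_preimage, Set.mem_pi, Set.mem_univ, true_implies]
    constructor
    · intro hx j
      by_cases hj : j = i
      · subst hj; simpa using hx
      · simp [Function.update_of_ne hj]
    · intro hx
      have := hx i
      simpa using this
  rw [h, Measure.pi_pi]
  rw [Finset.prod_eq_single i (fun j _ hj => by simp [Function.update_of_ne hj])
    (fun h => absurd (Finset.mem_univ i) h)]
  simp

lemma aux_compProd_comap_map {α β γ : Type*} [MeasurableSpace α] [MeasurableSpace β]
    [MeasurableSpace γ] (μ : Measure α) [IsProbabilityMeasure μ] {f : α → β}
    (hf : Measurable f) (κ : Kernel β γ) [IsMarkovKernel κ] :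
    (μ ⊗ₘ (κ.comap f hf)).map (fun p => (f p.1, p.2)) = (μ.map f) ⊗ₘ κ := by
  have hg : Measurable fun p : α × γ => (f p.1, p.2) :=
    (hf.comp measurable_fst).prodMk measurable_snd
  haveI : IsProbabilityMeasure (μ.map f) := Measure.isProbabilityMeasure_map hf.aemeasurable
  haveI : IsProbabilityMeasure ((μ ⊗ₘ (κ.comap f hf)).map (fun p : α × γ => (f p.1, p.2))) :=
    Measure.isProbabilityMeasure_map hg.aemeasurable
  refine ext_of_generate_finite _ generateFrom_prod.symm isPiSystem_prod ?_ (by simp)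
  rintro _ ⟨s, hs, t, ht, rfl⟩
  simp only [Set.mem_setOf_eq] at hs ht
  rw [Measure.map_apply hg (hs.prod ht)]
  have hpre : (fun p : α × γ => (f p.1, p.2)) ⁻¹' (s ×ˢ t) = (f ⁻¹' s) ×ˢ t := rfl
  rw [hpre, Measure.compProd_apply_prod (hf hs) ht, Measure.compProd_apply_prod hs ht,
    setLIntegral_map hs (κ.measurable_coe ht) hf]
  simp only [Kernel.comap_apply]

lemma glue_step {ι : Type} [DecidableEq ι] {X : ι → Type} [∀ i, MeasurableSpace (X i)]
    (u v : ι) (huv : u ≠ v) [StandardBorelSpace (X v)] [Nonempty (X v)]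
    (P : Measure (∀ i, X i)) [IsProbabilityMeasure P]
    (ρ : Measure (X u × X v)) [IsProbabilityMeasure ρ]
    (hρ : ρ.fst = P.map (fun x => x u)) :
    ∃ P' : Measure (∀ i, X i), IsProbabilityMeasure P' ∧
      (∀ i, i ≠ v → P'.map (fun x => x i) = P.map (fun x => x i)) ∧
      (∀ i j, i ≠ v → j ≠ v → P'.map (fun x => (x i, x j)) = P.map (fun x => (x i, x j))) ∧
      P'.map (fun x => (x u, x v)) = ρ := by
  have hupd : Measurable (fun p : (∀ i, X i) × X v => Function.update p.1 v p.2) := by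
    apply measurable_pi_lambda
    intro i
    by_cases h : i = v
    · subst h
      simp only [Function.update_self]
      exact measurable_snd
    · simp only [Function.update_of_ne h]
      exact (measurable_pi_apply i).comp measurable_fst
  set η := ρ.condKernel.comap (fun x : ∀ i, X i => x u) (measurable_pi_apply u) with hη
  have hQfst : (P ⊗ₘ η).map Prod.fst = P := Measure.fst_compProd P η
  refine ⟨((P ⊗ₘ η).map (fun p => Function.update p.1 v p.2)), ?_, ?_, ?_, ?_⟩
  · exact Measure.isProbabilityMeasure_map hupd.aemeasurable
  · intro i hi
    rw [Measure.map_map (measurable_pi_apply i) hupd]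
    have he : ((fun x : ∀ i, X i => x i) ∘ fun p : (∀ i, X i) × X v => Function.update p.1 v p.2)
        = (fun x : ∀ i, X i => x i) ∘ Prod.fst := by
      funext p
      simp [Function.comp, Function.update_of_ne hi]
    rw [he, ← Measure.map_map (measurable_pi_apply i) measurable_fst, hQfst]
  · intro i j hi hj
    have hm : Measurable fun x : ∀ i, X i => (x i, x j) :=
      (measurable_pi_apply i).prodMk (measurable_pi_apply j)
    rw [Measure.map_map hm hupd]
    have he : ((fun x : ∀ i, X i => (x i, x j)) ∘
        fun p : (∀ i, X i) × X v => Function.update p.1 v p.2)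
        = (fun x : ∀ i, X i => (x i, x j)) ∘ Prod.fst := by
      funext p
      simp [Function.comp, Function.update_of_ne hi, Function.update_of_ne hj]
    rw [he, ← Measure.map_map hm measurable_fst, hQfst]
  · have hm : Measurable fun x : ∀ i, X i => (x u, x v) :=
      (measurable_pi_apply u).prodMk (measurable_pi_apply v)
    rw [Measure.map_map hm hupd]
    have he : ((fun x : ∀ i, X i => (x u, x v)) ∘
        fun p : (∀ i, X i) × X v => Function.update p.1 v p.2)
        = fun p : (∀ i, X i) × X v => (p.1 u, p.2) := by
      funext p
      simp [Function.comp, Function.update_of_ne huv, Function.update_self]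
    rw [he]
    calc (P ⊗ₘ η).map (fun p : (∀ i, X i) × X v => (p.1 u, p.2))
        = (P.map fun x => x u) ⊗ₘ ρ.condKernel :=
          aux_compProd_comap_map P (measurable_pi_apply u) ρ.condKernel
      _ = ρ.fst ⊗ₘ ρ.condKernel := by rw [hρ]
      _ = ρ := ρ.disintegrate ρ.condKernel

lemma cross_walk {V : Type} {G : SimpleGraph V} {S : Finset V} :
    ∀ {a b : V} (_ : G.Walk a b), a ∈ S → b ∉ S → ∃ u ∈ S, ∃ w, w ∉ S ∧ G.Adj u w := by
  intro a b p
  induction p with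
  | nil => intro ha hb; exact absurd ha hb
  | @cons x y z h q ih =>
    intro ha hb
    by_cases hy : y ∈ S
    · exact ih hy hb
    · exact ⟨x, ha, y, hy, h⟩

lemma tree_unique_nbr {V : Type} {G : SimpleGraph V} (hG : G.IsTree) [DecidableEq V]
    {S : Finset V}
    (hS : ∀ a ∈ S, ∀ b ∈ S, ∃ p : G.Walk a b, ∀ x ∈ p.support, x ∈ S)
    {v u w : V} (hv : v ∉ S) (hu : u ∈ S) (hw : w ∈ S)
    (hadju : G.Adj v u) (hadjw : G.Adj v w) : u = w := by
  by_contra hne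
  obtain ⟨p, hp⟩ := hS u hu w hw
  have hq2 : (SimpleGraph.Walk.cons hadju.symm
      (SimpleGraph.Walk.cons hadjw SimpleGraph.Walk.nil)).IsPath := by
    rw [SimpleGraph.Walk.cons_isPath_iff]
    constructor
    · rw [SimpleGraph.Walk.cons_isPath_iff]
      refine ⟨SimpleGraph.Walk.IsPath.nil, ?_⟩
      simp only [SimpleGraph.Walk.support_nil, List.mem_singleton]
      intro h
      exact hv (h ▸ hw)
    · simp only [SimpleGraph.Walk.support_cons, SimpleGraph.Walk.support_nil, List.mem_cons,
        List.mem_singleton]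
      push_neg
      exact ⟨fun h => hv (h ▸ hu), hne, List.not_mem_nil⟩
  have heq := hG.IsAcyclic.path_unique ⟨p.bypass, p.bypass_isPath⟩ ⟨_, hq2⟩
  have hv_mem : v ∈ p.bypass.support := by
    have hval : p.bypass = SimpleGraph.Walk.cons hadju.symm
        (SimpleGraph.Walk.cons hadjw SimpleGraph.Walk.nil) := congrArg Subtype.val heq
    rw [hval]
    simp
  exact hv (hp v (p.support_bypass_subset hv_mem))



/-- Vorob'ev–Berkes–Philipp theorem, tree form. Given a tree whose
vertices carry Polish Borel probability spaces and whose edges carry pairwise-consistent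
couplings, there is a law on the product space projecting onto every edge law and hence
onto every vertex law. -/
theorem vorobev_berkes_philipp_tree
    (n : ℕ) (G : SimpleGraph (Fin n)) (hG : G.IsTree)
    (Xs : Fin n → Type)
    [∀ i, TopologicalSpace (Xs i)] [∀ i, PolishSpace (Xs i)]
    [∀ i, MeasurableSpace (Xs i)] [∀ i, BorelSpace (Xs i)]
    (Pv : ∀ i, Measure (Xs i)) (hPv : ∀ i, IsProbabilityMeasure (Pv i))
    (Pe : ∀ i j : Fin n, Measure (Xs i × Xs j))
    (hPe : ∀ i j, i < j → G.Adj i j → IsProbabilityMeasure (Pe i j))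
    (margFst : ∀ i j, i < j → G.Adj i j → (Pe i j).map Prod.fst = Pv i)
    (margSnd : ∀ i j, i < j → G.Adj i j → (Pe i j).map Prod.snd = Pv j) :
    ∃ P : Measure (∀ i, Xs i), IsProbabilityMeasure P ∧
      (∀ i j, i < j → G.Adj i j → P.map (fun x => (x i, x j)) = Pe i j) ∧
      ∀ i, P.map (fun x => x i) = Pv i := by
  classical
  haveI := hPv
  by_cases hn : n = 0
  · subst hn
    exact ⟨Measure.dirac (fun i => i.elim0), inferInstance, fun i => i.elim0,
      fun i => i.elim0⟩
  -- the directed edge couplings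
  set couple : ∀ a b : Fin n, Measure (Xs a × Xs b) :=
    fun a b => if a < b then Pe a b else (Pe b a).map Prod.swap with hcouple
  have hlt : ∀ a b : Fin n, G.Adj a b → ¬ a < b → b < a := by
    intro a b hab h
    exact lt_of_le_of_ne (not_lt.mp h) hab.symm.ne
  have hc_prob : ∀ a b, G.Adj a b → IsProbabilityMeasure (couple a b) := by
    intro a b hab
    simp only [hcouple]
    by_cases h : a < b
    · rw [if_pos h]; exact hPe a b h hab
    · rw [if_neg h]
      haveI := hPe b a (hlt a b hab h) hab.symm
      exact Measure.isProbabilityMeasure_map measurable_swap.aemeasurable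
  have hc_fst : ∀ a b, G.Adj a b → (couple a b).map Prod.fst = Pv a := by
    intro a b hab
    simp only [hcouple]
    by_cases h : a < b
    · rw [if_pos h]; exact margFst a b h hab
    · rw [if_neg h, Measure.map_map measurable_fst measurable_swap]
      have he : (Prod.fst ∘ Prod.swap : Xs b × Xs a → Xs a) = Prod.snd := rfl
      rw [he]; exact margSnd b a (hlt a b hab h) hab.symm
  have hc_snd : ∀ a b, G.Adj a b → (couple a b).map Prod.snd = Pv b := by
    intro a b hab
    simp only [hcouple]
    by_cases h : a < b
    · rw [if_pos h]; exact margSnd a b h hab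
    · rw [if_neg h, Measure.map_map measurable_snd measurable_swap]
      have he : (Prod.snd ∘ Prod.swap : Xs b × Xs a → Xs b) = Prod.fst := rfl
      rw [he]; exact margFst b a (hlt a b hab h) hab.symm
  have hc_swap : ∀ a b, G.Adj a b → couple b a = (couple a b).map Prod.swap := by
    intro a b hab
    simp only [hcouple]
    by_cases h : a < b
    · rw [if_pos h, if_neg (asymm h)]
    · rw [if_pos (hlt a b hab h), if_neg h,
        Measure.map_map measurable_swap measurable_swap]
      have he : (Prod.swap ∘ Prod.swap : Xs b × Xs a → Xs b × Xs a) = id := by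
        funext p; simp
      rw [he, Measure.map_id]
  have hne_type : ∀ i, Nonempty (Xs i) := by
    intro i
    by_contra h
    rw [not_nonempty_iff] at h
    have h1 := (hPv i).measure_univ
    rw [Set.univ_eq_empty_iff.mpr h, measure_empty] at h1
    exact zero_ne_one h1
  -- main induction on the size of the complement
  have main : ∀ m : ℕ, ∀ S : Finset (Fin n), Sᶜ.card ≤ m → S.Nonempty →
      (∀ a ∈ S, ∀ b ∈ S, ∃ p : G.Walk a b, ∀ x ∈ p.support, x ∈ S) →
      (∃ P : Measure (∀ i, Xs i), IsProbabilityMeasure P ∧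
        (∀ a b, G.Adj a b → a ∈ S → b ∈ S → P.map (fun x => (x a, x b)) = couple a b) ∧
        (∀ i, i ∈ S → P.map (fun x => x i) = Pv i)) →
      ∃ P : Measure (∀ i, Xs i), IsProbabilityMeasure P ∧
        (∀ a b, G.Adj a b → P.map (fun x => (x a, x b)) = couple a b) ∧
        (∀ i, P.map (fun x => x i) = Pv i) := by
    intro m
    induction m with
    | zero =>
      intro S hcard hne hconn hgood
      have hSuniv : S = Finset.univ := by
        have : Sᶜ = ∅ := Finset.card_eq_zero.mp (Nat.le_zero.mp hcard)
        rwa [Finset.compl_eq_empty_iff] at this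
      subst hSuniv
      obtain ⟨P, h1, h2, h3⟩ := hgood
      exact ⟨P, h1, fun a b hab => h2 a b hab (Finset.mem_univ a) (Finset.mem_univ b),
        fun i => h3 i (Finset.mem_univ i)⟩
    | succ m ih =>
      intro S hcard hne hconn hgood
      by_cases hU : S = Finset.univ
      · subst hU
        obtain ⟨P, h1, h2, h3⟩ := hgood
        exact ⟨P, h1, fun a b hab => h2 a b hab (Finset.mem_univ a) (Finset.mem_univ b),
          fun i => h3 i (Finset.mem_univ i)⟩
      · obtain ⟨a, haS⟩ := hne
        obtain ⟨b, hbS⟩ : ∃ b, b ∉ S := by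
          by_contra h
          push_neg at h
          exact hU (Finset.eq_univ_iff_forall.mpr h)
        obtain ⟨p⟩ := hG.isConnected.preconnected a b
        obtain ⟨u, huS, v, hvS, hadj⟩ := cross_walk p haS hbS
        obtain ⟨P, hPprob, hPedge, hPvert⟩ := hgood
        haveI := hPprob
        haveI : IsProbabilityMeasure (couple u v) := hc_prob u v hadj
        haveI : Nonempty (Xs v) := hne_type v
        have hρ : (couple u v).fst = P.map (fun x => x u) := by
          have hd : (couple u v).fst = (couple u v).map Prod.fst := rfl
          rw [hd, hc_fst u v hadj, hPvert u huS]
        obtain ⟨P', hP'prob, hP'vert, hP'pair, hP'key⟩ :=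
          glue_step u v hadj.ne P (couple u v) hρ
        haveI := hP'prob
        have hwalkS : ∀ x ∈ S, ∃ p : G.Walk x v, ∀ z ∈ p.support, z ∈ insert v S := by
          intro x hx
          obtain ⟨q, hq⟩ := hconn x hx u huS
          refine ⟨q.concat hadj, ?_⟩
          intro z hz
          rw [SimpleGraph.Walk.support_concat] at hz
          simp only [List.concat_eq_append, List.mem_append, List.mem_singleton] at hz
          rcases hz with h | h
          · exact Finset.mem_insert_of_mem (hq z h)
          · exact h ▸ Finset.mem_insert_self v S
        refine ih (insert v S) ?_ ⟨v, Finset.mem_insert_self v S⟩ ?_ ⟨P', hP'prob, ?_, ?_⟩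
        · rw [Finset.compl_insert]
          have hvmem : v ∈ Sᶜ := Finset.mem_compl.mpr hvS
          have h1 := Finset.card_erase_of_mem hvmem
          have h2 : 1 ≤ Sᶜ.card := Finset.card_pos.mpr ⟨v, hvmem⟩
          omega
        · intro x hx y hy
          rcases Finset.mem_insert.mp hx with rfl | hx' <;>
            rcases Finset.mem_insert.mp hy with rfl | hy'
          · exact ⟨SimpleGraph.Walk.nil, by simp⟩
          · obtain ⟨q, hq⟩ := hwalkS y hy'
            refine ⟨q.reverse, ?_⟩
            intro z hz
            rw [SimpleGraph.Walk.support_reverse] at hz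
            exact hq z (List.mem_reverse.mp hz)
          · exact hwalkS x hx'
          · obtain ⟨q, hq⟩ := hconn x hx' y hy'
            exact ⟨q, fun z hz => Finset.mem_insert_of_mem (hq z hz)⟩
        · intro c d hcd hc hd
          rcases Finset.mem_insert.mp hc with rfl | hcS
          · rcases Finset.mem_insert.mp hd with rfl | hdS
            · exact absurd rfl hcd.ne
            · have hdu : d = u := tree_unique_nbr hG hconn hvS hdS huS hcd hadj.symm
              subst hdu
              have hm : Measurable fun x : ∀ i, Xs i => (x d, x c) :=
                (measurable_pi_apply d).prodMk (measurable_pi_apply c)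
              have he : (fun x : ∀ i, Xs i => (x c, x d))
                  = Prod.swap ∘ (fun x => (x d, x c)) := rfl
              rw [he, ← Measure.map_map measurable_swap hm, hP'key]
              exact (hc_swap d c hadj).symm
          · rcases Finset.mem_insert.mp hd with rfl | hdS
            · have hcu : c = u := tree_unique_nbr hG hconn hvS hcS huS hcd.symm hadj.symm
              subst hcu
              exact hP'key
            · have h1 : c ≠ v := fun h => hvS (h ▸ hcS)
              have h2 : d ≠ v := fun h => hvS (h ▸ hdS)
              rw [hP'pair c d h1 h2]
              exact hPedge c d hcd hcS hdS
        · intro i hi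
          rcases Finset.mem_insert.mp hi with rfl | hiS
          · have hm : Measurable fun x : ∀ j, Xs j => (x u, x i) :=
              (measurable_pi_apply u).prodMk (measurable_pi_apply i)
            have he : (fun x : ∀ j, Xs j => x i)
                = Prod.snd ∘ (fun x : ∀ j, Xs j => (x u, x i)) := rfl
            rw [he, ← Measure.map_map measurable_snd hm, hP'key]
            exact hc_snd u i hadj
          · rw [hP'vert i (fun h => hvS (h ▸ hiS))]
            exact hPvert i hiS
  -- base case: a single vertex
  have hpos : 0 < n := Nat.pos_of_ne_zero hn
  set r : Fin n := ⟨0, hpos⟩ with hr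
  obtain ⟨P, h1, h2, h3⟩ := main n {r}
    (le_trans (Finset.card_le_univ _) (by simp))
    ⟨r, Finset.mem_singleton_self r⟩
    (by
      intro x hx y hy
      rw [Finset.mem_singleton] at hx hy
      subst hx; subst hy
      exact ⟨SimpleGraph.Walk.nil, by simp⟩)
    (by
      refine ⟨Measure.pi Pv, inferInstance, ?_, ?_⟩
      · intro x y hxy hx hy
        rw [Finset.mem_singleton] at hx hy
        exact absurd (hx.trans hy.symm) hxy.ne
      · intro i _
        exact aux_pi_marg Xs Pv i)
  refine ⟨P, h1, ?_, h3⟩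
  intro i j hij hadj
  have := h2 i j hadj
  rw [this]
  simp only [hcouple]
  rw [if_pos hij]


end
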